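/- With the notation above (α < q₀ case), if x₊ = inf{x : v_n(x) > 0 ∀n ≥ 1} satisfies x₊ > 1, then f(x₊) = 1, where f(x) = Σ_{k=1}^{∞} (σ_{k+1} - σ_{k-1})·v_k(x)·ζ(x)^k and ζ(x) = x - √(x² - 1). -/

import Mathlib

set_option maxHeartbeats 1000000
open Filter

private lemma lin_rec_tendsto {z l : ℝ} (hz0 : 0 ≤ z) (hz1 : z < 1)
    {a b : ℕ → ℝ} (hab : ∀ n, a (n+1) = z * a n + b n)
    (hb : Filter.Tendsto b Filter.atTop (nhds l)) :
    Filter.Tendsto a Filter.atTop (nhds (l / (1 - z))) := by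
  have h1z : 0 < 1 - z := by linarith
  set T := l / (1 - z) with hT
  have hTfix : T = z * T + l := by
    rw [hT]; field_simp; ring
  rw [Metric.tendsto_atTop]
  intro ε hε
  obtain ⟨N₁, hN₁⟩ := (Metric.tendsto_atTop.mp hb) ((1-z)*ε/4) (by positivity)
  have key : ∀ k, |a (N₁+k) - T| ≤ z^k * |a N₁ - T| + ε/2 := by
    intro k; induction k with
    | zero => simp only [pow_zero, one_mul, Nat.add_zero]; linarith
    | succ k ih =>
      have e1 : a (N₁+k+1) - T = z*(a (N₁+k) - T) + (b (N₁+k) - l) := by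
        linear_combination hab (N₁+k) - hTfix
      have e2 : |a (N₁+k+1) - T| ≤ z*|a (N₁+k) - T| + |b (N₁+k) - l| := by
        rw [e1]
        refine (abs_add_le _ _).trans ?_
        rw [abs_mul, abs_of_nonneg hz0]
      have e3 : |b (N₁+k) - l| ≤ (1-z)*ε/4 := by
        have := hN₁ (N₁+k) (by omega)
        rw [Real.dist_eq] at this; linarith
      have e4 : z*|a (N₁+k) - T| ≤ z*(z^k*|a N₁ - T| + ε/2) :=
        mul_le_mul_of_nonneg_left ih hz0
      have e5 : z*(z^k*|a N₁ - T| + ε/2) = z^(k+1)*|a N₁ - T| + z*ε/2 := by ring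
      have e6 : z*ε/2 + (1-z)*ε/4 ≤ ε/2 := by nlinarith
      show |a (N₁+(k+1)) - T| ≤ z^(k+1) * |a N₁ - T| + ε/2
      have : N₁ + (k+1) = N₁ + k + 1 := by omega
      rw [this]; linarith
  obtain ⟨K, hK⟩ : ∃ K, z^K * |a N₁ - T| < ε/2 := by
    have h0 : Filter.Tendsto (fun k => z^k * |a N₁ - T|) Filter.atTop (nhds (0*|a N₁ - T|)) :=
      (tendsto_pow_atTop_nhds_zero_of_lt_one hz0 hz1).mul_const _
    rw [zero_mul] at h0
    exact (h0.eventually (gt_mem_nhds (half_pos hε))).exists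
  refine ⟨N₁ + K, fun n hn => ?_⟩
  obtain ⟨k, hnk, hKk⟩ : ∃ k, n = N₁ + k ∧ K ≤ k := ⟨n - N₁, by omega, by omega⟩
  subst hnk
  have h1 := key k
  have hzk : z^k ≤ z^K := pow_le_pow_of_le_one hz0 hz1.le hKk
  have h2 : z^k*|a N₁ - T| ≤ z^K*|a N₁ - T| :=
    mul_le_mul_of_nonneg_right hzk (abs_nonneg _)
  rw [Real.dist_eq]
  have := abs_nonneg (a (N₁+k) - T)
  calc |a (N₁+k) - T| ≤ z^k * |a N₁ - T| + ε/2 := h1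
    _ ≤ z^K * |a N₁ - T| + ε/2 := by linarith
    _ < ε := by linarith

/-- If x₊ = inf{x : v_n(x) > 0 for all n ≥ 1} satisfies x₊ > 1, then
f(x₊) = 1. -/
theorem f_at_xstar_eq_one
    (q₀ α x₀ : ℝ) (hq1 : 1 / 2 < q₀) (hq2 : q₀ < 1)
    (hα1 : 1 - q₀ < α) (hα2 : α < q₀)
    (hx : x₀ = 1 / (2 * Real.sqrt (q₀ * (1 - q₀))))
    (σ : ℕ → ℝ)
    (hσ0 : σ 0 = 2 * x₀ * α) (hσ : ∀ n, σ (n + 1) = 2 * x₀ - 1 / σ n)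
    (v : ℝ → ℕ → ℝ)
    (hv0 : ∀ x, v x 0 = 0) (hv1 : ∀ x, v x 1 = 1)
    (hvr : ∀ x, ∀ n, 1 ≤ n →
      v x (n + 1) = (2 * x - σ (n + 1) + σ (n - 1)) * v x n - v x (n - 1))
    (ζ : ℝ → ℝ) (hζ : ∀ x, ζ x = x - Real.sqrt (x ^ 2 - 1))
    (f : ℝ → ℕ → ℝ)
    (hf : ∀ x n, f x n =
      ∑ k ∈ Finset.Icc 1 n, (σ (k + 1) - σ (k - 1)) * v x k * ζ x ^ k)
    (xs : ℝ) (hxs : xs = sInf {x : ℝ | ∀ n, 1 ≤ n → 0 < v x n})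
    (h1 : 1 < xs) :
    Tendsto (f xs) atTop (nhds 1) := by
  -- ### Basic numeric facts
  have hq0 : 0 < q₀ := by linarith
  have h1q : 0 < 1 - q₀ := by linarith
  have hqq : 0 < q₀ * (1 - q₀) := mul_pos hq0 h1q
  have hsqp : 0 < Real.sqrt (q₀ * (1 - q₀)) := Real.sqrt_pos.mpr hqq
  have hx₀ : 0 < x₀ := by rw [hx]; positivity
  have hs2q : (Real.sqrt (q₀ * (1 - q₀)))^2 = q₀ * (1 - q₀) := Real.sq_sqrt hqq.le
  have hx2q : x₀^2 * (q₀ * (1 - q₀)) = 1/4 := by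
    rw [hx, div_pow, mul_pow, hs2q]
    field_simp
    ring
  obtain ⟨A, hA⟩ : ∃ A, A = 2*x₀*(1-q₀) := ⟨_, rfl⟩
  obtain ⟨B, hB⟩ : ∃ B, B = 2*x₀*q₀ := ⟨_, rfl⟩
  have hApos : 0 < A := by rw [hA]; exact mul_pos (by linarith) h1q
  have hAB : A * B = 1 := by rw [hA, hB]; nlinarith [hx2q]
  have hABsum : A + B = 2*x₀ := by rw [hA, hB]; ring
  have hAltB : A < B := by rw [hA, hB]; nlinarith
  -- ### σ is increasing and bounded
  have hσbd : ∀ n, A < σ n ∧ σ n < B := by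
    intro n; induction n with
    | zero =>
      rw [hσ0]
      constructor
      · rw [hA]; nlinarith
      · rw [hB]; nlinarith
    | succ n ih =>
      obtain ⟨hA', hB'⟩ := ih
      have hp : 0 < σ n := hApos.trans hA'
      rw [hσ n]
      constructor
      · have h2 : 1/σ n < B := by rw [div_lt_iff₀ hp]; nlinarith
        linarith
      · have h2 : A < 1/σ n := by rw [lt_div_iff₀ hp]; nlinarith
        linarith
  have hσmono : ∀ n, σ n ≤ σ (n+1) := by
    intro n
    obtain ⟨hA', hB'⟩ := hσbd n
    have hp : 0 < σ n := hApos.trans hA'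
    rw [hσ n]
    have h2 : 1/σ n ≤ 2*x₀ - σ n := by
      rw [div_le_iff₀ hp]
      nlinarith [mul_pos (sub_pos.mpr hA') (sub_pos.mpr hB')]
    linarith
  -- ### facts about z = ζ xs
  have hxs2 : (0:ℝ) < xs^2 - 1 := by
    have h' := mul_pos (sub_pos.mpr h1) (by linarith : (0:ℝ) < xs + 1)
    clear * - h'
    nlinarith
  obtain ⟨s, hs⟩ : ∃ s, s = Real.sqrt (xs^2 - 1) := ⟨_, rfl⟩
  have hsp : 0 < s := hs ▸ Real.sqrt_pos.mpr hxs2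
  have hs2 : s^2 = xs^2 - 1 := hs ▸ Real.sq_sqrt hxs2.le
  have hsx : s < xs := by clear * - hs2 hsp h1; nlinarith
  obtain ⟨z, hzdef⟩ : ∃ z, z = ζ xs := ⟨_, rfl⟩
  have hz : z = xs - s := by rw [hzdef, hζ xs, ← hs]
  have hz0 : 0 < z := by rw [hz]; linarith
  have hz1 : z < 1 := by rw [hz]; clear * - hs2 hsp h1; nlinarith
  have hzne : z ≠ 0 := ne_of_gt hz0
  have hzinv : z * (xs + s) = 1 := by rw [hz]; clear * - hs2; nlinarith
  have hzinv' : xs + s = z⁻¹ := by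
    rw [← one_div, eq_div_iff hzne]; linarith [hzinv]
  have h2xs : 2*xs = z + z⁻¹ := by rw [← hzinv', hz]; ring
  -- ### continuity of v · n
  have hcont : ∀ n, Continuous (fun x => v x n) := by
    intro n
    induction n using Nat.strong_induction_on with
    | _ n ih =>
      match n with
      | 0 =>
        have : (fun x => v x 0) = fun _ => (0:ℝ) := funext hv0
        rw [this]; exact continuous_const
      | 1 =>
        have : (fun x => v x 1) = fun _ => (1:ℝ) := funext hv1
        rw [this]; exact continuous_const
      | (n+2) =>
        have hrw : (fun x => v x (n+2)) =
            fun x => (2*x - σ (n+2) + σ n) * v x (n+1) - v x n := by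
          funext x
          have h := hvr x (n+1) (by omega)
          simpa using h
        rw [hrw]
        exact ((((continuous_const.mul continuous_id).sub continuous_const).add
          continuous_const).mul (ih (n+1) (by omega))).sub (ih n (by omega))
  -- ### the set S and positivity at xs
  obtain ⟨S, hSdef⟩ : ∃ S : Set ℝ, S = {x : ℝ | ∀ n, 1 ≤ n → 0 < v x n} := ⟨_, rfl⟩
  rw [← hSdef] at hxs
  have hSne : S.Nonempty := by
    by_contra h
    rw [Set.not_nonempty_iff_eq_empty] at h
    rw [h, Real.sInf_empty] at hxs
    linarith
  have hSbdd : BddBelow S := by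
    by_contra h
    rw [Real.sInf_of_not_bddBelow h] at hxs
    linarith
  have hVnn : ∀ n, 0 ≤ v xs n := by
    intro n
    rcases Nat.eq_zero_or_pos n with h0 | hn
    · rw [h0, hv0]
    by_contra hneg
    push_neg at hneg
    have hev : ∀ᶠ y in nhds xs, v y n < 0 :=
      ((hcont n).tendsto xs).eventually (gt_mem_nhds hneg)
    obtain ⟨δ, hδpos, hδ⟩ := Metric.eventually_nhds_iff.mp hev
    have hlt : sInf S < xs + δ := by rw [← hxs]; linarith
    obtain ⟨x, hxS, hxlt⟩ := (csInf_lt_iff hSbdd hSne).mp hlt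
    have hxge : xs ≤ x := by rw [hxs]; exact csInf_le hSbdd hxS
    have hd : dist x xs < δ := by
      rw [Real.dist_eq]
      exact abs_lt.mpr ⟨by linarith, by linarith⟩
    have hvx : v x n < 0 := hδ hd
    rw [hSdef] at hxS
    exact absurd (hxS n hn) (by linarith)
  have hVpos : ∀ n, 1 ≤ n → 0 < v xs n := by
    classical
    by_contra h
    push_neg at h
    obtain ⟨n₀, hn₀1, hn₀⟩ := h
    have hP : ∃ k, 1 ≤ k ∧ v xs k = 0 := ⟨n₀, hn₀1, le_antisymm hn₀ (hVnn n₀)⟩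
    obtain ⟨N, hN⟩ : ∃ N, N = Nat.find hP := ⟨_, rfl⟩
    obtain ⟨hN1, hN0⟩ : 1 ≤ N ∧ v xs N = 0 := hN ▸ Nat.find_spec hP
    have hNne1 : N ≠ 1 := by
      intro h'
      rw [h', hv1] at hN0
      norm_num at hN0
    have hN2 : 2 ≤ N := by omega
    have hrec := hvr xs N (by omega)
    rw [hN0] at hrec
    have h1' : v xs (N+1) = - v xs (N-1) := by rw [hrec]; ring
    have h2' : v xs (N-1) = 0 := le_antisymm (by linarith [hVnn (N+1), h1']) (hVnn (N-1))
    have hle : Nat.find hP ≤ N - 1 := Nat.find_min' hP ⟨by omega, h2'⟩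
    omega
  -- ### the quantities u, g, t
  obtain ⟨u, hu⟩ : ∃ u : ℕ → ℝ, u = fun n => v xs (n+1) - z * v xs n := ⟨_, rfl⟩
  obtain ⟨g, hg⟩ : ∃ g : ℕ → ℝ, g = fun n => z^n * u n := ⟨_, rfl⟩
  obtain ⟨t, ht⟩ : ∃ t : ℕ → ℝ, t = fun n => z^n * v xs n := ⟨_, rfl⟩
  have hg_succ : ∀ n, g (n+1) = g n + (σ n - σ (n+2)) * (z^(n+1) * v xs (n+1)) := by
    intro n
    have hrec := hvr xs (n+1) (by omega)
    simp only [Nat.add_sub_cancel] at hrec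
    simp only [hg, hu]
    rw [hrec, h2xs]
    field_simp
    ring
  have hσd : ∀ n, σ n - σ (n+2) ≤ 0 := fun n => by
    have h1' := hσmono n; have h2' := hσmono (n+1); linarith
  have hg_step : ∀ n, g (n+1) ≤ g n := by
    intro n
    have h1' : 0 ≤ z^(n+1) * v xs (n+1) := mul_nonneg (pow_pos hz0 _).le (hVnn _)
    have hterm : (σ n - σ (n+2)) * (z^(n+1) * v xs (n+1)) ≤ 0 :=
      mul_nonpos_of_nonpos_of_nonneg (hσd n) h1'
    linarith [hg_succ n]
  have hg_anti : Antitone g := antitone_nat_of_succ_le hg_step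
  have ht_succ : ∀ n, t (n+1) = z^2 * t n + z * g n := by
    intro n; simp only [ht, hg, hu]; ring
  have hu_nonneg : ∀ n, 0 ≤ u n := by
    by_contra hcon
    push_neg at hcon
    obtain ⟨N, hN⟩ := hcon
    have hgN : g N < 0 := by
      rw [hg]; exact mul_neg_of_pos_of_neg (pow_pos hz0 N) hN
    have hcpos : 0 < -(z * g N) := by nlinarith
    have key : ∀ k : ℕ, t (N+1+k) ≤ t (N+1) - k * (-(z * g N)) := by
      intro k; induction k with
      | zero => simp
      | succ k ih =>
        have e1 : t (N+1+k+1) = z^2 * t (N+1+k) + z * g (N+1+k) := ht_succ _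
        have e2 : g (N+1+k) ≤ g N := hg_anti (by omega)
        have e3 : 0 < t (N+1+k) := by
          rw [ht]; exact mul_pos (pow_pos hz0 _) (hVpos _ (by omega))
        have e4 : z^2 ≤ 1 := by nlinarith
        have e5 : z^2 * t (N+1+k) ≤ t (N+1+k) := by nlinarith
        have e6 : z * g (N+1+k) ≤ z * g N := by nlinarith
        have e7 : (N+1+(k+1)) = (N+1+k)+1 := by omega
        rw [e7]
        push_cast
        push_cast at ih
        linarith
    obtain ⟨k, hk⟩ := exists_nat_gt (t (N+1) / (-(z * g N)))
    have h5 : t (N+1) - k * (-(z*g N)) < 0 := by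
      rw [div_lt_iff₀ hcpos] at hk; linarith
    have h6 : 0 < t (N+1+k) := by
      rw [ht]; exact mul_pos (pow_pos hz0 _) (hVpos _ (by omega))
    linarith [key k]
  have hg_nonneg : ∀ n, 0 ≤ g n := fun n => by
    rw [hg]; exact mul_nonneg (pow_pos hz0 n).le (hu_nonneg n)
  have hgL : Tendsto g atTop (nhds (⨅ n, g n)) :=
    tendsto_atTop_ciInf hg_anti ⟨0, by rintro w ⟨n, rfl⟩; exact hg_nonneg n⟩
  obtain ⟨L, hLdef⟩ : ∃ L, L = ⨅ n, g n := ⟨_, rfl⟩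
  rw [← hLdef] at hgL
  have hL0 : 0 ≤ L := hLdef ▸ le_ciInf hg_nonneg
  -- ### telescoping : f xs n = 1 - g n
  have hfg : ∀ n, f xs n = 1 - g n := by
    intro n; induction n with
    | zero =>
      rw [hf, Finset.Icc_eq_empty (by omega)]
      simp [hg, hu, hv0, hv1]
    | succ n ih =>
      rw [hf] at ih ⊢
      rw [Finset.sum_Icc_succ_top (by omega : 1 ≤ n+1), ih]
      simp only [Nat.add_sub_cancel]
      rw [← hzdef, hg_succ n]
      ring
  -- ### conclusion reduces to L = 0
  have hfin : Tendsto (f xs) atTop (nhds (1 - L)) := by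
    have h' : Tendsto (fun n => 1 - g n) atTop (nhds (1 - L)) := tendsto_const_nhds.sub hgL
    exact h'.congr (fun n => (hfg n).symm)
  have hLzero : L = 0 := by
    by_contra hLne
    have hLpos : 0 < L := lt_of_le_of_ne hL0 (Ne.symm hLne)
    -- t n → T > 0
    have hz2 : (0:ℝ) ≤ z^2 := sq_nonneg z
    have hz21 : z^2 < 1 := by clear * - hz0 hz1; nlinarith
    have hbt : Tendsto (fun n => z * g n) atTop (nhds (z * L)) := hgL.const_mul z
    have ht_lim' : Tendsto t atTop (nhds ((z*L)/(1 - z^2))) :=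
      lin_rec_tendsto hz2 hz21 ht_succ hbt
    obtain ⟨T, hTdef⟩ : ∃ T, T = (z*L)/(1-z^2) := ⟨_, rfl⟩
    rw [← hTdef] at ht_lim'
    have hTpos : 0 < T := by
      rw [hTdef]; exact div_pos (mul_pos hz0 hLpos) (by clear * - hz0 hz1; nlinarith)
    -- ratios r n → z⁻¹
    obtain ⟨r, hr⟩ : ∃ r : ℕ → ℝ, r = fun n => v xs (n+1) / v xs n := ⟨_, rfl⟩
    have hr_lim : Tendsto r atTop (nhds z⁻¹) := by
      have h1' : Tendsto (fun n => t (n+1)) atTop (nhds T) :=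
        ht_lim'.comp (tendsto_add_atTop_nat 1)
      have h2' : Tendsto (fun n => z * t n) atTop (nhds (z*T)) := ht_lim'.const_mul z
      have h3' : Tendsto (fun n => t (n+1) / (z * t n)) atTop (nhds (T/(z*T))) :=
        h1'.div h2' (by positivity)
      have h4' : T/(z*T) = z⁻¹ := by
        rw [mul_comm, div_mul_eq_div_div, div_self (ne_of_gt hTpos), one_div]
      rw [h4'] at h3'
      refine h3'.congr' ?_
      filter_upwards [eventually_ge_atTop 1] with n hn
      have hvn : v xs n ≠ 0 := ne_of_gt (hVpos n hn)
      simp only [hr, ht]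
      rw [show z * (z^n * v xs n) = z^(n+1) * v xs n by ring]
      exact mul_div_mul_left _ _ (pow_ne_zero _ hzne)
    -- β and N
    have hzi1 : 1 < z⁻¹ := by rw [← hzinv']; linarith
    obtain ⟨β, hβdef⟩ : ∃ β, β = (1 + z⁻¹)/2 := ⟨_, rfl⟩
    have hβ1 : 1 < β := by rw [hβdef]; linarith
    have hβz : β < z⁻¹ := by rw [hβdef]; linarith
    have hev : ∀ᶠ n in atTop, β < r n := hr_lim.eventually (eventually_gt_nhds hβz)
    obtain ⟨N₀, hN₀⟩ := eventually_atTop.mp hev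
    obtain ⟨N, hNdef⟩ : ∃ N, N = max N₀ 1 := ⟨_, rfl⟩
    have hN1 : 1 ≤ N := hNdef ▸ le_max_right _ _
    have hNN₀ : N₀ ≤ N := hNdef ▸ le_max_left _ _
    -- φ, lam, ε
    obtain ⟨φ, hφdef⟩ : ∃ φ, φ = (β - 1)/2 := ⟨_, rfl⟩
    have hφpos : 0 < φ := by rw [hφdef]; linarith
    have hβφ : 1 < β - φ := by rw [hφdef]; linarith
    obtain ⟨lam, hlamdef⟩ : ∃ lam, lam = β*(β-φ) := ⟨_, rfl⟩
    have hlam1 : 1 < lam := by rw [hlamdef]; clear * - hβ1 hβφ; nlinarith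
    -- neighborhood conditions
    have hE1 : ∀ᶠ y in nhds xs, ∀ k ∈ Finset.Icc 1 (N+1), 0 < v y k := by
      rw [Filter.eventually_all_finset]
      intro k hk
      have hk1 : 1 ≤ k := (Finset.mem_Icc.mp hk).1
      exact ((hcont k).tendsto xs).eventually (eventually_gt_nhds (hVpos k hk1))
    have hE2 : ∀ᶠ y in nhds xs, |v y (N+1) / v y N - r N| < φ := by
      have hRc : ContinuousAt (fun y => v y (N+1) / v y N) xs :=
        ((hcont (N+1)).continuousAt).div ((hcont N).continuousAt) (ne_of_gt (hVpos N hN1))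
      have hRval : v xs (N+1) / v xs N = r N := by simp only [hr]
      have hmem : {w : ℝ | |w - r N| < φ} ∈ nhds (v xs (N+1) / v xs N) := by
        rw [hRval]
        simpa [Metric.ball, Real.dist_eq] using Metric.ball_mem_nhds (r N) hφpos
      exact hRc.eventually hmem
    obtain ⟨δ, hδpos, hδ⟩ := Metric.eventually_nhds_iff.mp (hE1.and hE2)
    obtain ⟨ε, hεdef⟩ : ∃ ε, ε = min (δ/2) (φ*(lam-1)/(2*lam)) := ⟨_, rfl⟩
    have hεpos : 0 < ε := by
      rw [hεdef]
      exact lt_min (by linarith) (div_pos (mul_pos hφpos (by linarith)) (by linarith))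
    have hεδ : ε < δ := by
      have h' : ε ≤ δ/2 := hεdef ▸ min_le_left _ _
      linarith
    have hεc : 2*ε*lam ≤ φ*(lam-1) := by
      have h' : ε ≤ φ*(lam-1)/(2*lam) := hεdef ▸ min_le_right _ _
      rw [le_div_iff₀ (by linarith : (0:ℝ) < 2*lam)] at h'
      clear * - h'; nlinarith
    have hφ2ε : 0 < φ - 2*ε := by clear * - hεc hφpos hlam1 hεpos; nlinarith
    obtain ⟨y, hydef⟩ : ∃ y, y = xs - ε := ⟨_, rfl⟩
    have hyd : dist y xs < δ := by
      rw [hydef, Real.dist_eq, show xs - ε - xs = -ε by ring, abs_neg, abs_of_pos hεpos]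
      exact hεδ
    obtain ⟨hyE1, hyE2⟩ := hδ hyd
    -- the key invariant propagates
    have hQ : ∀ m, N ≤ m → 0 < v y m ∧ 0 < v y (m+1) ∧ (r m - φ) * v y m ≤ v y (m+1) := by
      intro m hm
      induction m, hm using Nat.le_induction with
      | base =>
        have hyN : 0 < v y N := hyE1 N (Finset.mem_Icc.mpr ⟨hN1, by omega⟩)
        have hyN1 : 0 < v y (N+1) := hyE1 (N+1) (Finset.mem_Icc.mpr ⟨by omega, le_refl _⟩)
        refine ⟨hyN, hyN1, ?_⟩
        have h' := abs_lt.mp hyE2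
        have h'' : r N - φ ≤ v y (N+1) / v y N := by linarith [h'.1]
        calc (r N - φ) * v y N ≤ (v y (N+1) / v y N) * v y N :=
              mul_le_mul_of_nonneg_right h'' hyN.le
          _ = v y (N+1) := by field_simp
      | succ m hm ih =>
        obtain ⟨hvm, hvm1, hinv⟩ := ih
        have hrm : β < r m := hN₀ m (by omega)
        have hrm1 : β < r (m+1) := hN₀ (m+1) (by omega)
        have hVm : 0 < v xs m := hVpos m (by omega)
        have hVm1 : 0 < v xs (m+1) := hVpos (m+1) (by omega)
        have hrecx := hvr xs (m+1) (by omega)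
        simp only [Nat.add_sub_cancel] at hrecx
        have hrecy := hvr y (m+1) (by omega)
        simp only [Nat.add_sub_cancel] at hrecy
        obtain ⟨q, hqdef⟩ : ∃ q, q = v xs m / v xs (m+1) := ⟨_, rfl⟩
        have hqpos : 0 < q := hqdef ▸ div_pos hVm hVm1
        have hqR : q * r m = 1 := by
          rw [hqdef]; simp only [hr]
          field_simp
        have hCx : r (m+1) = (2*xs - σ (m+2) + σ m) - q := by
          simp only [hr, hqdef]
          rw [hrecx, sub_div, mul_div_cancel_right₀ _ (ne_of_gt hVm1)]
        have h2y : 2*y - σ (m+2) + σ m = (2*xs - σ (m+2) + σ m) - 2*ε := by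
          rw [hydef]; ring
        have hCy : v y (m+2) = ((2*xs - σ (m+2) + σ m) - 2*ε) * v y (m+1) - v y m := by
          rw [hrecy, h2y]
        have hqβ : q * β ≤ 1 := by
          have h' := mul_nonneg hqpos.le (sub_nonneg.mpr hrm.le)
          clear * - h' hqR; nlinarith
        have hstep : φ ≤ (φ - 2*ε) * (β*(β-φ)) := by
          rw [← hlamdef]; clear * - hεc hlam1; nlinarith
        have hkey : q*φ ≤ (φ - 2*ε)*(r m - φ) := by
          have k1 : q*φ ≤ q*((φ-2*ε)*(β*(β-φ))) := mul_le_mul_of_nonneg_left hstep hqpos.le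
          have k2 : q*((φ-2*ε)*(β*(β-φ))) = (φ-2*ε)*(β-φ)*(q*β) := by ring
          have k3 : 0 ≤ (φ-2*ε)*(β-φ) := mul_nonneg hφ2ε.le (by linarith)
          have k4 : (φ-2*ε)*(β-φ)*(q*β) ≤ (φ-2*ε)*(β-φ)*1 := mul_le_mul_of_nonneg_left hqβ k3
          have k5 : (φ-2*ε)*(β-φ) ≤ (φ-2*ε)*(r m-φ) :=
            mul_le_mul_of_nonneg_left (by linarith) hφ2ε.le
          clear * - k1 k2 k4 k5; linarith
        have hA1 : 1 ≤ (φ - 2*ε + q)*(r m - φ) := by clear * - hkey hqR; nlinarith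
        have hwle : v y m ≤ (φ - 2*ε + q) * v y (m+1) := by
          have c1 : 0 < φ - 2*ε + q := by linarith
          have c2 : (φ-2*ε+q)*((r m - φ)*v y m) ≤ (φ-2*ε+q)*v y (m+1) :=
            mul_le_mul_of_nonneg_left hinv c1.le
          have c3 := mul_le_mul_of_nonneg_right hA1 hvm.le
          clear * - c2 c3; nlinarith
        have hfin2 : (r (m+1) - φ) * v y (m+1) ≤ v y (m+2) := by
          have e1 : (r (m+1) - φ) * v y (m+1) =
              ((2*xs - σ (m+2) + σ m) - q - φ) * v y (m+1) := by rw [hCx]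
          rw [e1, hCy]
          clear * - hwle; nlinarith
        have hv2pos : 0 < v y (m+2) := by
          have c4 := mul_pos (show 0 < r (m+1) - φ by linarith) hvm1
          clear * - hfin2 c4; linarith
        exact ⟨hvm1, hv2pos, hfin2⟩
    -- y ∈ S : contradiction with xs = inf S
    have hyS : y ∈ S := by
      rw [hSdef]
      intro n hn
      rcases le_or_gt n (N+1) with hle | hlt
      · exact hyE1 n (Finset.mem_Icc.mpr ⟨hn, hle⟩)
      · exact (hQ n (by omega)).1
    have hxley : xs ≤ y := by rw [hxs]; exact csInf_le hSbdd hyS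
    rw [hydef] at hxley
    linarith
  rw [hLzero, sub_zero] at hfin
  exact hfin
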